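/- Let p, k ∈ ℂ and let I ⊆ F be the two-sided ideal generated by the six elements x₂x₁ + x₁x₂, x₃x₁ + x₁x₃, x₃x₂ + x₂x₃ + p x₁x₂, x₁², x₂², and x₃² + k x₁x₂ + p x₁x₃. Then the quotient algebra F/I has ℂ-dimension 8, and the images of the eight monomials x₁^{e₁} x₂^{e₂} x₃^{e₃} with e₁, e₂, e₃ ∈ {0, 1} form a ℂ-basis of F/I. (This quotient is the Nichols algebra associated to the braiding of type R_{1,2} with t = −1, b = −p, a = −p².) -/

import Mathlib

set_option linter.all false
set_option maxHeartbeats 1000000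

/-- The free associative unital `ℂ`-algebra on three generators. -/
abbrev F : Type := FreeAlgebra ℂ (Fin 3)

/-- The generators `x₁ = X 0`, `x₂ = X 1`, `x₃ = X 2`. -/
noncomputable def X (i : Fin 3) : F := FreeAlgebra.ι ℂ i

/-- Generators: `x₂x₁ + x₁x₂`, `x₃x₁ + x₁x₃`, `x₃x₂ + x₂x₃ + p x₁x₂`, `x₁²`, `x₂²`, `x₃² + k x₁x₂ + p x₁x₃`. -/
noncomputable def S (p k : ℂ) : Set F :=
  {X 1 * X 0 + X 0 * X 1,
   X 2 * X 0 + X 0 * X 2,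
   X 2 * X 1 + X 1 * X 2 + p • (X 0 * X 1),
   X 0 * X 0,
   X 1 * X 1,
   X 2 * X 2 + k • (X 0 * X 1) + p • (X 0 * X 2)}

/-- The relation whose two-sided-ideal closure is the ideal generated by `S`;
`RingQuot rel` is the quotient `F/I`. -/
def rel (p k : ℂ) : F → F → Prop := fun x y => x ∈ S p k ∧ y = 0

/-! ### Auxiliary: an 8-dimensional representation of `F/I`. -/

abbrev ιT : Type := Fin 2 × Fin 2 × Fin 2
abbrev MT : Type := ιT → ℂ

noncomputable def L1 : Module.End ℂ MT where
  toFun v x := if x.1 = 1 then v (0, x.2) else 0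
  map_add' u v := by funext x; by_cases h : x.1 = 1 <;> simp [h]
  map_smul' c v := by funext x; by_cases h : x.1 = 1 <;> simp [h]

noncomputable def L2 : Module.End ℂ MT where
  toFun v x := if x.2.1 = 1 then (if x.1 = 1 then -1 else 1) * v (x.1, 0, x.2.2) else 0
  map_add' u v := by
    funext x; by_cases h : x.2.1 = 1 <;> by_cases h2 : x.1 = 1 <;> simp [h, h2] <;> ring
  map_smul' c v := by
    funext x; by_cases h : x.2.1 = 1 <;> by_cases h2 : x.1 = 1 <;> simp [h, h2] <;> ring

noncomputable def L3 (p k : ℂ) : Module.End ℂ MT where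
  toFun v x :=
    (if x = (0,0,1) then v (0,0,0) else 0)
    + (if x = (1,0,1) then -v (1,0,0) - p * v (0,0,1) else 0)
    + (if x = (0,1,1) then -v (0,1,0) else 0)
    + (if x = (1,1,0) then -p * v (0,1,0) - k * v (0,0,1) else 0)
    + (if x = (1,1,1) then v (1,1,0) - 2*p*v (0,1,1) else 0)
  map_add' u v := by
    funext x
    simp only [Pi.add_apply]; split_ifs <;> ring
  map_smul' c v := by
    funext x
    simp only [Pi.smul_apply, smul_eq_mul, RingHom.id_apply]; split_ifs <;> ring

lemma relA : L2 * L1 + L1 * L2 = 0 := by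
  apply LinearMap.ext; intro v; funext x
  rcases x with ⟨a,b,c⟩
  fin_cases a <;> fin_cases b <;> fin_cases c <;>
    simp [L1, L2, Module.End.mul_apply]

lemma relB (p k : ℂ) : L3 p k * L1 + L1 * L3 p k = 0 := by
  apply LinearMap.ext; intro v; funext x
  rcases x with ⟨a,b,c⟩
  fin_cases a <;> fin_cases b <;> fin_cases c <;>
    simp [L1, L3, Module.End.mul_apply, Prod.ext_iff] <;> ring

lemma relC (p k : ℂ) : L3 p k * L2 + L2 * L3 p k + p • (L1 * L2) = 0 := by
  apply LinearMap.ext; intro v; funext x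
  rcases x with ⟨a,b,c⟩
  fin_cases a <;> fin_cases b <;> fin_cases c <;>
    simp [L1, L2, L3, Module.End.mul_apply, Prod.ext_iff] <;> ring

lemma relD : L1 * L1 = 0 := by
  apply LinearMap.ext; intro v; funext x
  rcases x with ⟨a,b,c⟩
  fin_cases a <;> fin_cases b <;> fin_cases c <;> simp [L1, Module.End.mul_apply]

lemma relE : L2 * L2 = 0 := by
  apply LinearMap.ext; intro v; funext x
  rcases x with ⟨a,b,c⟩
  fin_cases a <;> fin_cases b <;> fin_cases c <;> simp [L2, Module.End.mul_apply]

lemma relF (p k : ℂ) : L3 p k * L3 p k + k • (L1 * L2) + p • (L1 * L3 p k) = 0 := by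
  apply LinearMap.ext; intro v; funext x
  rcases x with ⟨a,b,c⟩
  fin_cases a <;> fin_cases b <;> fin_cases c <;>
    simp [L1, L2, L3, Module.End.mul_apply, Prod.ext_iff] <;> ring

noncomputable def φR (p k : ℂ) : F →ₐ[ℂ] Module.End ℂ MT :=
  FreeAlgebra.lift ℂ ![L1, L2, L3 p k]

lemma φR_X0 (p k : ℂ) : φR p k (X 0) = L1 := by simp [φR, X]
lemma φR_X1 (p k : ℂ) : φR p k (X 1) = L2 := by simp [φR, X]
lemma φR_X2 (p k : ℂ) : φR p k (X 2) = L3 p k := by simp [φR, X]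

lemma φR_S (p k : ℂ) : ∀ s ∈ S p k, φR p k s = 0 := by
  intro s hs
  simp only [S, Set.mem_insert_iff, Set.mem_singleton_iff] at hs
  rcases hs with rfl|rfl|rfl|rfl|rfl|rfl <;>
    simp only [map_add, map_mul, map_smul, φR_X0, φR_X1, φR_X2]
  · exact relA
  · exact relB p k
  · exact relC p k
  · exact relD
  · exact relE
  · exact relF p k

noncomputable def ψR (p k : ℂ) : RingQuot (rel p k) →ₐ[ℂ] Module.End ℂ MT :=
  RingQuot.liftAlgHom ℂ ⟨φR p k, by rintro x y ⟨hx, rfl⟩; rw [φR_S p k x hx, map_zero]⟩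

lemma ψR_mk (p k : ℂ) (a : F) :
    ψR p k (RingQuot.mkAlgHom ℂ (rel p k) a) = φR p k a :=
  RingQuot.liftAlgHom_mkAlgHom_apply ℂ (φR p k) _ a

noncomputable def δ0 : MT := fun x => if x = (0,0,0) then 1 else 0

noncomputable def TR (p k : ℂ) : RingQuot (rel p k) →ₗ[ℂ] MT :=
  (LinearMap.applyₗ δ0).comp (ψR p k).toLinearMap

lemma TR_mk (p k : ℂ) (e : ιT) :
    TR p k (RingQuot.mkAlgHom ℂ (rel p k)
      (X 0 ^ (e.1 : ℕ) * X 1 ^ (e.2.1 : ℕ) * X 2 ^ (e.2.2 : ℕ))) = Pi.single e 1 := by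
  obtain ⟨a,b,c⟩ := e
  have h : TR p k (RingQuot.mkAlgHom ℂ (rel p k)
      (X 0 ^ (a : ℕ) * X 1 ^ (b : ℕ) * X 2 ^ (c : ℕ)))
      = ((L1 ^ (a : ℕ)) * (L2 ^ (b : ℕ)) * ((L3 p k) ^ (c : ℕ))) δ0 := by
    simp [TR, ψR_mk, map_mul, map_pow, φR_X0, φR_X1, φR_X2]
  rw [h]
  fin_cases a <;> fin_cases b <;> fin_cases c <;>
    · funext x
      rcases x with ⟨u,v,w⟩
      fin_cases u <;> fin_cases v <;> fin_cases w <;>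
        simp [L1, L2, L3, δ0, Module.End.mul_apply, Pi.single_apply, Prod.ext_iff]

/-- Left multiplication by the generators preserves the span of the eight monomials. -/
lemma mul_mem_spanQ {Q : Type} [Ring Q] [Algebra ℂ Q] (p k : ℂ) (y0 y1 y2 : Q)
    (r1 : y1*y0 = -(y0*y1)) (r2 : y2*y0 = -(y0*y2))
    (r3 : y2*y1 = -(y1*y2) - p • (y0*y1))
    (r4 : y0*y0 = 0) (r5 : y1*y1 = 0)
    (r6 : y2*y2 = -(k • (y0*y1)) - p • (y0*y2)) (y : Q)
    (hy : y = y0 ∨ y = y1 ∨ y = y2) :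
    ∀ w ∈ Submodule.span ℂ
      (Set.range fun e : ιT => y0 ^ (e.1 : ℕ) * y1 ^ (e.2.1 : ℕ) * y2 ^ (e.2.2 : ℕ)),
      y * w ∈ Submodule.span ℂ
      (Set.range fun e : ιT => y0 ^ (e.1 : ℕ) * y1 ^ (e.2.1 : ℕ) * y2 ^ (e.2.2 : ℕ)) := by
  set W := Submodule.span ℂ
      (Set.range fun e : ιT => y0 ^ (e.1 : ℕ) * y1 ^ (e.2.1 : ℕ) * y2 ^ (e.2.2 : ℕ)) with hW
  have l00 : ∀ t : Q, y0*(y0*t) = 0 := fun t => by rw [← mul_assoc, r4, zero_mul]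
  have l11 : ∀ t : Q, y1*(y1*t) = 0 := fun t => by rw [← mul_assoc, r5, zero_mul]
  have l10 : ∀ t : Q, y1*(y0*t) = -(y0*(y1*t)) := fun t => by
    rw [← mul_assoc, r1, neg_mul, mul_assoc]
  have l20 : ∀ t : Q, y2*(y0*t) = -(y0*(y2*t)) := fun t => by
    rw [← mul_assoc, r2, neg_mul, mul_assoc]
  have l21 : ∀ t : Q, y2*(y1*t) = -(y1*(y2*t)) - p • (y0*(y1*t)) := fun t => by
    rw [← mul_assoc, r3, sub_mul, neg_mul, smul_mul_assoc, mul_assoc, mul_assoc]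
  have l22 : ∀ t : Q, y2*(y2*t) = -(k • (y0*(y1*t))) - p • (y0*(y2*t)) := fun t => by
    rw [← mul_assoc, r6, sub_mul, neg_mul, smul_mul_assoc, smul_mul_assoc,
      mul_assoc, mul_assoc]
  have hwe : ∀ e : ιT, y0 ^ (e.1 : ℕ) * y1 ^ (e.2.1 : ℕ) * y2 ^ (e.2.2 : ℕ) ∈ W :=
    fun e => Submodule.subset_span ⟨e, rfl⟩
  have hm1 : (1 : Q) ∈ W := by simpa using hwe (0,0,0)
  have hma : y0 ∈ W := by simpa using hwe (1,0,0)
  have hmb : y1 ∈ W := by simpa using hwe (0,1,0)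
  have hmc : y2 ∈ W := by simpa using hwe (0,0,1)
  have hmab : y0*y1 ∈ W := by simpa using hwe (1,1,0)
  have hmac : y0*y2 ∈ W := by simpa using hwe (1,0,1)
  have hmbc : y1*y2 ∈ W := by simpa using hwe (0,1,1)
  have hmabc : y0*(y1*y2) ∈ W := by simpa [mul_assoc] using hwe (1,1,1)
  intro w hw
  induction hw using Submodule.span_induction with
  | zero => rw [mul_zero]; exact W.zero_mem
  | add u v hu hv hu' hv' => rw [mul_add]; exact W.add_mem hu' hv'
  | smul c u hu hu' => rw [mul_smul_comm]; exact W.smul_mem c hu'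
  | mem u hu =>
    obtain ⟨⟨a,b,c⟩, rfl⟩ := hu
    rcases hy with rfl|rfl|rfl <;> fin_cases a <;> fin_cases b <;> fin_cases c <;>
      · first
        | (simp only [Fin.val_zero, Fin.val_one, pow_zero, pow_one, one_mul, mul_one,
            l00, l11, l10, l20, l21, l22, r1, r2, r3, r4, r5, r6,
            mul_sub, mul_neg, mul_add, mul_smul_comm, mul_zero, zero_mul,
            smul_neg, smul_zero, sub_zero, zero_sub, neg_neg, neg_zero, smul_smul,
            mul_assoc])
        | skip
        repeat
          first
          | exact W.zero_mem
          | exact hm1 | exact hma | exact hmb | exact hmc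
          | exact hmab | exact hmac | exact hmbc | exact hmabc
          | apply W.add_mem
          | apply W.sub_mem
          | apply W.neg_mem
          | apply W.smul_mem

theorem dim_eight_R12_t_neg_one (p k : ℂ) :
    Module.finrank ℂ (RingQuot (rel p k)) = 8 ∧
    LinearIndependent ℂ (fun e : Fin 2 × Fin 2 × Fin 2 =>
      RingQuot.mkAlgHom ℂ (rel p k) (X 0 ^ (e.1 : ℕ) * X 1 ^ (e.2.1 : ℕ) * X 2 ^ (e.2.2 : ℕ))) ∧
    Submodule.span ℂ (Set.range (fun e : Fin 2 × Fin 2 × Fin 2 =>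
      RingQuot.mkAlgHom ℂ (rel p k) (X 0 ^ (e.1 : ℕ) * X 1 ^ (e.2.1 : ℕ) * X 2 ^ (e.2.2 : ℕ)))) = ⊤ := by
  have hli : LinearIndependent ℂ (fun e : ιT =>
      RingQuot.mkAlgHom ℂ (rel p k) (X 0 ^ (e.1 : ℕ) * X 1 ^ (e.2.1 : ℕ) * X 2 ^ (e.2.2 : ℕ))) := by
    apply LinearIndependent.of_comp (TR p k)
    have he : (⇑(TR p k) ∘ fun e : ιT =>
        RingQuot.mkAlgHom ℂ (rel p k) (X 0 ^ (e.1 : ℕ) * X 1 ^ (e.2.1 : ℕ) * X 2 ^ (e.2.2 : ℕ)))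
        = ⇑(Pi.basisFun ℂ ιT) := by
      funext e
      rw [Function.comp_apply, TR_mk p k e, Pi.basisFun_apply]
    rw [he]
    exact (Pi.basisFun ℂ ιT).linearIndependent
  -- relations in the quotient
  have hrel : ∀ s ∈ S p k, RingQuot.mkAlgHom ℂ (rel p k) s = 0 := by
    intro s hs
    have h : rel p k s 0 := ⟨hs, rfl⟩
    have := RingQuot.mkAlgHom_rel ℂ h
    rwa [map_zero] at this
  set π := RingQuot.mkAlgHom ℂ (rel p k) with hπ
  have h1 := hrel (X 1 * X 0 + X 0 * X 1) (by simp [S])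
  have h2 := hrel (X 2 * X 0 + X 0 * X 2) (by simp [S])
  have h3 := hrel (X 2 * X 1 + X 1 * X 2 + p • (X 0 * X 1)) (by simp [S])
  have h4 := hrel (X 0 * X 0) (by simp [S])
  have h5 := hrel (X 1 * X 1) (by simp [S])
  have h6 := hrel (X 2 * X 2 + k • (X 0 * X 1) + p • (X 0 * X 2)) (by simp [S])
  simp only [map_add, map_mul, map_smul] at h1 h2 h3 h4 h5 h6
  have r1 := eq_neg_of_add_eq_zero_left h1
  have r2 := eq_neg_of_add_eq_zero_left h2
  rw [add_assoc] at h3 h6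
  have r3 := eq_neg_of_add_eq_zero_left h3
  have r6 := eq_neg_of_add_eq_zero_left h6
  rw [neg_add, ← sub_eq_add_neg] at r3 r6
  have key := mul_mem_spanQ p k (π (X 0)) (π (X 1)) (π (X 2)) r1 r2 r3 h4 h5 r6
  have hfg : (fun e : ιT => π (X 0 ^ (e.1 : ℕ) * X 1 ^ (e.2.1 : ℕ) * X 2 ^ (e.2.2 : ℕ)))
      = (fun e : ιT => (π (X 0)) ^ (e.1 : ℕ) * (π (X 1)) ^ (e.2.1 : ℕ) * (π (X 2)) ^ (e.2.2 : ℕ)) := by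
    funext e; simp [map_mul, map_pow]
  have hspan : Submodule.span ℂ (Set.range (fun e : ιT =>
      π (X 0 ^ (e.1 : ℕ) * X 1 ^ (e.2.1 : ℕ) * X 2 ^ (e.2.2 : ℕ)))) = ⊤ := by
    rw [hfg, eq_top_iff]
    rintro q -
    obtain ⟨z, rfl⟩ := RingQuot.mkAlgHom_surjective ℂ (rel p k) q
    set W := Submodule.span ℂ
      (Set.range fun e : ιT =>
        (π (X 0)) ^ (e.1 : ℕ) * (π (X 1)) ^ (e.2.1 : ℕ) * (π (X 2)) ^ (e.2.2 : ℕ)) with hWdef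
    have hm1 : (1 : RingQuot (rel p k)) ∈ W := by
      have h0 : (π (X 0)) ^ (((0,0,0) : ιT).1 : ℕ) * (π (X 1)) ^ (((0,0,0) : ιT).2.1 : ℕ)
          * (π (X 2)) ^ (((0,0,0) : ιT).2.2 : ℕ) ∈ W :=
        Submodule.subset_span ⟨((0,0,0) : ιT), rfl⟩
      simpa using h0
    have main : ∀ z : F, ∀ w ∈ W, π z * w ∈ W := by
      intro z
      induction z using FreeAlgebra.induction with
      | grade0 r =>
        intro w hw
        rw [AlgHom.commutes, ← Algebra.smul_def]
        exact W.smul_mem r hw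
      | grade1 i =>
        intro w hw
        refine key (π (X i)) ?_ w hw
        fin_cases i
        · exact Or.inl rfl
        · exact Or.inr (Or.inl rfl)
        · exact Or.inr (Or.inr rfl)
      | mul a b ha hb =>
        intro w hw
        rw [map_mul, mul_assoc]
        exact ha _ (hb w hw)
      | add a b ha hb =>
        intro w hw
        rw [map_add, add_mul]
        exact W.add_mem (ha w hw) (hb w hw)
    have := main z 1 hm1
    rwa [mul_one] at this
  refine ⟨?_, hli, hspan⟩
  have b : Module.Basis ιT ℂ (RingQuot (rel p k)) := Module.Basis.mk hli hspan.ge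
  rw [Module.finrank_eq_card_basis b]
  rfl
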